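/- Given a multiplicative flow f : E → ℝ_{>0} on a directed graph with value |f| = QMC(N), and a cycle u_0, ..., u_m of edges none of which lies in any minimum cut (so the flow values on these edges are strictly between 1/d and d), multiplying the flows on all cycle edges by a common factor 1+ε with ε sufficiently small preserves the conservation law, the capacity constraints, and the flow value. -/

import Mathlib

open Finset

/-- The quantum min-cut of a network. -/
noncomputable def QMC {V : Type*} [DecidableEq V] (E : Finset (V × V)) (d : V × V → ℕ)
    (s t : V) : ℕ :=
  sInf {m : ℕ | ∃ S : Finset V, s ∈ S ∧ t ∉ S ∧
    m = ∏ e ∈ E.filter (fun e => e.1 ∈ S ∧ e.2 ∉ S), d e}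

/-- Given a multiplicative flow of value `QMC(N)` and a cycle of
edges whose flow values are strictly between `1/d` and `d`, multiplying the flows on
all cycle edges by `1 + ε` for sufficiently small `ε > 0` preserves the conservation
law, the capacity constraints, and the flow value. -/
theorem cycle_perturbation_preserves_flow {V : Type*} [DecidableEq V]
    (E : Finset (V × V)) (hsymm : ∀ u v : V, (u, v) ∈ E → (v, u) ∈ E)
    (d : V × V → ℕ) (hdsymm : ∀ u v : V, d (u, v) = d (v, u))
    (hd2 : ∀ e ∈ E, 2 ≤ d e)
    (s t : V) (hst : s ≠ t)
    (f : V × V → ℝ)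
    (hpos : ∀ e ∈ E, 0 < f e)
    (hcap : ∀ e ∈ E, 1 / (d e : ℝ) ≤ f e ∧ f e ≤ (d e : ℝ))
    (hcons : ∀ v : V, v ≠ s → v ≠ t →
      ∏ e ∈ E.filter (fun e => e.2 = v), f e = ∏ e ∈ E.filter (fun e => e.1 = v), f e)
    (hval : (∏ e ∈ E.filter (fun e => e.1 = s), f e) /
        (∏ e ∈ E.filter (fun e => e.2 = s), f e) = (QMC E d s t : ℝ))
    (m : ℕ) (u : Fin (m + 1) → V) (hu : Function.Injective u)
    (hcycE : ∀ i : Fin (m + 1), (u i, u (i + 1)) ∈ E)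
    (hstrict : ∀ i : Fin (m + 1),
      1 / (d (u i, u (i + 1)) : ℝ) < f (u i, u (i + 1)) ∧
      f (u i, u (i + 1)) < (d (u i, u (i + 1)) : ℝ))
    (C : Finset (V × V))
    (hC : C = Finset.image (fun i : Fin (m + 1) => (u i, u (i + 1))) Finset.univ) :
    ∃ ε₀ > (0 : ℝ), ∀ ε : ℝ, 0 < ε → ε ≤ ε₀ →
      ∀ f' : V × V → ℝ, (∀ e, f' e = if e ∈ C then (1 + ε) * f e else f e) →
        (∀ v : V, v ≠ s → v ≠ t →
          ∏ e ∈ E.filter (fun e => e.2 = v), f' e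
            = ∏ e ∈ E.filter (fun e => e.1 = v), f' e) ∧
        (∀ e ∈ E, 1 / (d e : ℝ) ≤ f' e ∧ f' e ≤ (d e : ℝ)) ∧
        (∏ e ∈ E.filter (fun e => e.1 = s), f' e) /
            (∏ e ∈ E.filter (fun e => e.2 = s), f' e)
          = (∏ e ∈ E.filter (fun e => e.1 = s), f e) /
            (∏ e ∈ E.filter (fun e => e.2 = s), f e) := by
  classical
  set g : Fin (m + 1) → V × V := fun i => (u i, u (i + 1)) with hg
  have hg_inj : Function.Injective g := by
    intro i j hij
    exact hu (congrArg Prod.fst hij)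
  have hCE : ∀ e ∈ C, e ∈ E := by
    intro e he
    rw [hC] at he
    obtain ⟨i, _, rfl⟩ := Finset.mem_image.mp he
    exact hcycE i
  -- counting lemma
  have hcount : ∀ v : V, ((C.filter (fun e => e.2 = v)).card)
      = ((C.filter (fun e => e.1 = v)).card) := by
    intro v
    rw [hC, Finset.filter_image, Finset.filter_image,
      Finset.card_image_of_injective _ hg_inj, Finset.card_image_of_injective _ hg_inj]
    apply Finset.card_bij (fun i _ => i + 1)
    · intro i hi
      simp only [Finset.mem_filter, Finset.mem_univ, true_and] at hi ⊢
      exact hi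
    · intro i _ j _ h
      exact add_right_cancel h
    · intro j hj
      simp only [Finset.mem_filter, Finset.mem_univ, true_and] at hj ⊢
      exact ⟨j - 1, by show u (j - 1 + 1) = v; rwa [sub_add_cancel], by rw [sub_add_cancel]⟩
  -- product perturbation lemma
  have key : ∀ (ε : ℝ) (f' : V × V → ℝ),
      (∀ e, f' e = if e ∈ C then (1 + ε) * f e else f e) →
      ∀ (p : V × V → Prop) (inst : DecidablePred p),
      ∏ e ∈ E.filter p, f' e
        = (1 + ε) ^ ((C.filter p).card) * ∏ e ∈ E.filter p, f e := by
    intro ε f' hf' p inst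
    have h1 : ∏ e ∈ E.filter p, f' e
        = ∏ e ∈ E.filter p, (if e ∈ C then (1 + ε) else 1) * f e := by
      apply Finset.prod_congr rfl
      intro e _
      rw [hf' e]
      split_ifs <;> ring
    have hfil : (E.filter p).filter (fun e => e ∈ C) = C.filter p := by
      ext e
      simp only [Finset.mem_filter]
      constructor
      · rintro ⟨⟨he, hp⟩, hc⟩; exact ⟨hc, hp⟩
      · rintro ⟨hc, hp⟩; exact ⟨⟨hCE e hc, hp⟩, hc⟩
    rw [h1, Finset.prod_mul_distrib]
    congr 1
    rw [Finset.prod_ite, Finset.prod_const, Finset.prod_const, one_pow, mul_one, hfil]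
  -- choose ε₀
  have hne : (Finset.univ : Finset (Fin (m + 1))).Nonempty := ⟨0, Finset.mem_univ 0⟩
  set ε₀ : ℝ := Finset.univ.inf' hne (fun i => (d (g i) : ℝ) / f (g i) - 1) with hε₀
  have hε₀pos : 0 < ε₀ := by
    rw [hε₀, Finset.lt_inf'_iff]
    intro i _
    have hfpos := hpos (g i) (hcycE i)
    have := (hstrict i).2
    have h1 : (1 : ℝ) < (d (g i) : ℝ) / f (g i) := (one_lt_div hfpos).mpr this
    linarith
  refine ⟨ε₀, hε₀pos, ?_⟩
  intro ε hε hεle f' hf'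
  have h1ε : (0 : ℝ) < 1 + ε := by linarith
  refine ⟨?_, ?_, ?_⟩
  · intro v hvs hvt
    rw [key ε f' hf' (fun e => e.2 = v) _, key ε f' hf' (fun e => e.1 = v) _,
      hcount v, hcons v hvs hvt]
  · intro e he
    rw [hf' e]
    split_ifs with hc
    · rw [hC] at hc
      obtain ⟨i, _, rfl⟩ := Finset.mem_image.mp hc
      have hfpos := hpos (g i) (hcycE i)
      constructor
      · calc 1 / (d (g i) : ℝ) ≤ f (g i) := (hcap _ (hcycE i)).1
          _ ≤ (1 + ε) * f (g i) := le_mul_of_one_le_left hfpos.le (by linarith)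
      · have hle : ε₀ ≤ (d (g i) : ℝ) / f (g i) - 1 :=
          Finset.inf'_le _ (Finset.mem_univ i)
        have : (1 + ε) ≤ (d (g i) : ℝ) / f (g i) := by linarith
        calc (1 + ε) * f (g i) ≤ ((d (g i) : ℝ) / f (g i)) * f (g i) :=
              mul_le_mul_of_nonneg_right this hfpos.le
          _ = (d (g i) : ℝ) := div_mul_cancel₀ _ hfpos.ne'
    · exact hcap e he
  · rw [key ε f' hf' (fun e => e.1 = s) _, key ε f' hf' (fun e => e.2 = s) _, hcount s]
    exact mul_div_mul_left _ _ (pow_ne_zero _ h1ε.ne')
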